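/- Let L be a nonzero linear form on ℂ^{r+1} and consider the point (L^2, L^3) in ℙ(S_2)×ℙ(S_3). The tangent space at (L^2, L^3) to the indeterminacy scheme B of the rational map (F,G) ↦ dF ∧ dG consists exactly of pairs (F', G') ∈ S_2/⟨L^2⟩ ⊕ S_3/⟨L^3⟩ with G' = (3/2)·L·F' (mod ⟨L^3⟩); i.e. pairs (F',G') of homogeneous polynomials of degrees 2 and 3 satisfying d(L^2) ∧ dG' + dF' ∧ d(L^3) = 0 are exactly those with 2G' − 3LF' ∈ ⟨L^3⟩ + ℂ·L^3 (G' = (3/2)LF' up to multiples of L^3, after modifying F' by multiples of L^2). -/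

import Mathlib

open MvPolynomial

/-- Polynomial differential forms on `ℂ^n`: the value at a finite set `I` of
indices is the polynomial coefficient of `dx_I` (indices in increasing order). -/
abbrev PolyForm (n : ℕ) := Finset (Fin n) → MvPolynomial (Fin n) ℂ

/-- `η` is a `q`-form if its coefficients vanish off index sets of cardinality `q`. -/
def PolyForm.IsForm {n : ℕ} (q : ℕ) (η : PolyForm n) : Prop :=
  ∀ I : Finset (Fin n), I.card ≠ q → η I = 0

/-- Exterior derivative of a polynomial differential form. -/
noncomputable def polyExtDeriv {n : ℕ} (η : PolyForm n) : PolyForm n :=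
  fun J => ∑ j ∈ J,
    (-1 : MvPolynomial (Fin n) ℂ) ^ ((J.filter (· < j)).card) * pderiv j (η (J.erase j))

/-- Contraction (interior product) with the Euler vector field `R = Σ xᵢ ∂/∂xᵢ`. -/
noncomputable def contractR {n : ℕ} (η : PolyForm n) : PolyForm n :=
  fun I => ∑ j ∈ Iᶜ,
    (-1 : MvPolynomial (Fin n) ℂ) ^ ((I.filter (· < j)).card) * X j * η (insert j I)

/-- Contraction with a constant vector field `v`. -/
noncomputable def contractVec {n : ℕ} (v : Fin n → ℂ) (η : PolyForm n) : PolyForm n :=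
  fun I => ∑ j ∈ Iᶜ,
    (-1 : MvPolynomial (Fin n) ℂ) ^ ((I.filter (· < j)).card) * C (v j) * η (insert j I)

/-- Wedge product `α ∧ β` where `α` is a `p`-form. -/
noncomputable def wedgeForm {n : ℕ} (p : ℕ) (α β : PolyForm n) : PolyForm n :=
  fun K => ∑ I ∈ K.powerset.filter (fun I => I.card = p),
    (-1 : MvPolynomial (Fin n) ℂ) ^ (∑ a ∈ I, ((K \ I).filter (· < a)).card)
      * α I * β (K \ I)

/-- The `(m)`-form `dF₀ ∧ ⋯ ∧ dF_{m-1}`, given by determinants of Jacobian minors. -/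
noncomputable def dwedge {n m : ℕ} (F : Fin m → MvPolynomial (Fin n) ℂ) : PolyForm n :=
  fun K => if h : K.card = m then
      Matrix.det (Matrix.of fun i j : Fin m =>
        pderiv ((K.orderIsoOfFin h j : Fin n)) (F i))
    else 0

/-! ### Auxiliary lemmas -/

lemma pd_comm {n : ℕ} (i j : Fin n) (p : MvPolynomial (Fin n) ℂ) :
    pderiv i (pderiv j p) = pderiv j (pderiv i p) := by
  induction p using MvPolynomial.induction_on with
  | C a => simp
  | add p q hp hq => simp [hp, hq]
  | mul_X p k hp =>
    simp only [pderiv_mul, pderiv_X, map_add, hp]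
    rcases eq_or_ne k i with rfl | hki <;> rcases eq_or_ne k j with rfl | hkj <;>
      simp_all [Pi.single_apply]

lemma euler {m : ℕ} {p : MvPolynomial (Fin m) ℂ} {n : ℕ} (hp : p.IsHomogeneous n) :
    ∑ j, X j * pderiv j p = C (n : ℂ) * p := by
  conv_lhs => rw [p.as_sum]
  conv_rhs => rw [p.as_sum]
  rw [Finset.mul_sum]
  simp only [map_sum, Finset.mul_sum]
  rw [Finset.sum_comm]
  refine Finset.sum_congr rfl fun d hd => ?_
  have hdeg : d.degree = n := by
    by_contra h
    exact (mem_support_iff.mp hd) (hp.coeff_eq_zero h)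
  have key : ∀ j : Fin m, X j * pderiv j (monomial d (coeff d p))
      = monomial d ((d j : ℂ) * coeff d p) := by
    intro j
    rw [pderiv_monomial]
    rcases eq_or_ne (d j) 0 with h0 | h0
    · simp [h0]
    · rw [X, monomial_mul, one_mul, add_tsub_cancel_of_le, mul_comm]
      rwa [Finsupp.single_le_iff, Nat.one_le_iff_ne_zero]
  simp only [key]
  rw [← map_sum, C_mul_monomial]
  congr 1
  rw [← Finset.sum_mul, ← hdeg, Finsupp.degree_apply]
  norm_cast
  rw [Finset.sum_subset (Finset.subset_univ d.support)]
  intro x _ hx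
  simpa using hx

lemma pd_homog {m : ℕ} {p : MvPolynomial (Fin m) ℂ} {n : ℕ} (hp : p.IsHomogeneous n)
    (j : Fin m) : (pderiv j p).IsHomogeneous (n - 1) := by
  rw [p.as_sum, map_sum]
  refine (homogeneousSubmodule (Fin m) ℂ (n-1)).sum_mem fun d hd => ?_
  have hdeg : d.degree = n := by
    by_contra h
    exact (mem_support_iff.mp hd) (hp.coeff_eq_zero h)
  rw [mem_homogeneousSubmodule, pderiv_monomial]
  rcases eq_or_ne (d j) 0 with h0 | h0
  · simp [h0, isHomogeneous_zero]
  · apply isHomogeneous_monomial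
    have hle : Finsupp.single j 1 ≤ d := by
      rwa [Finsupp.single_le_iff, Nat.one_le_iff_ne_zero]
    have hsum : Finsupp.single j 1 + (d - Finsupp.single j 1) = d := add_tsub_cancel_of_le hle
    have hdd : Finsupp.degree (Finsupp.single j 1) + Finsupp.degree (d - Finsupp.single j 1)
        = n := by
      rw [Finsupp.degree_eq_weight_one] at hdeg ⊢
      rw [← map_add, hsum, hdeg]
    have h1 : Finsupp.degree (Finsupp.single j 1) = 1 := by
      rw [Finsupp.degree_apply, Finsupp.support_single_ne_zero _ one_ne_zero, Finset.sum_singleton,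
        Finsupp.single_eq_same]
    omega

lemma homog_zero_eq_C {m : ℕ} {p : MvPolynomial (Fin m) ℂ} (hp : p.IsHomogeneous 0) :
    p = C (coeff 0 p) := by
  ext d
  rcases eq_or_ne d 0 with rfl | hd
  · simp
  · rw [hp.coeff_eq_zero (by rwa [ne_eq, Finsupp.degree_eq_zero_iff]), coeff_C,
      if_neg (Ne.symm hd)]

lemma homog_C_mul {m : ℕ} {p : MvPolynomial (Fin m) ℂ} {d : ℕ} (hp : p.IsHomogeneous d)
    (a : ℂ) : (C a * p).IsHomogeneous d := by
  simpa using (isHomogeneous_C (Fin m) a).mul hp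

lemma pd_two {n : ℕ} (j : Fin n) : pderiv j (2 : MvPolynomial (Fin n) ℂ) = 0 := by
  rw [← map_ofNat (C : ℂ →+* MvPolynomial (Fin n) ℂ) 2]; exact pderiv_C

lemma pd_three {n : ℕ} (j : Fin n) : pderiv j (3 : MvPolynomial (Fin n) ℂ) = 0 := by
  rw [← map_ofNat (C : ℂ →+* MvPolynomial (Fin n) ℂ) 3]; exact pderiv_C

lemma pd_six {n : ℕ} (j : Fin n) : pderiv j (6 : MvPolynomial (Fin n) ℂ) = 0 := by
  rw [← map_ofNat (C : ℂ →+* MvPolynomial (Fin n) ℂ) 6]; exact pderiv_C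

lemma dwedge_eval {n : ℕ} (K : Finset (Fin n)) (hK : K.card = 2)
    (A B : MvPolynomial (Fin n) ℂ) :
    dwedge ![A, B] K =
      pderiv (K.orderIsoOfFin hK 0 : Fin n) A * pderiv (K.orderIsoOfFin hK 1 : Fin n) B
      - pderiv (K.orderIsoOfFin hK 1 : Fin n) A * pderiv (K.orderIsoOfFin hK 0 : Fin n) B := by
  rw [dwedge, dif_pos hK, Matrix.det_fin_two]
  simp [mul_comm]

lemma pair_exists {n : ℕ} {a b : Fin n} (hab : a ≠ b) :
    ∃ (hK : ({a, b} : Finset (Fin n)).card = 2),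
      ((({a,b} : Finset (Fin n)).orderIsoOfFin hK 0 : Fin n) = a ∧
        (({a,b} : Finset (Fin n)).orderIsoOfFin hK 1 : Fin n) = b) ∨
      ((({a,b} : Finset (Fin n)).orderIsoOfFin hK 0 : Fin n) = b ∧
        (({a,b} : Finset (Fin n)).orderIsoOfFin hK 1 : Fin n) = a) := by
  refine ⟨Finset.card_pair hab, ?_⟩
  set K : Finset (Fin n) := {a, b} with hKdef
  set hK := Finset.card_pair hab
  have h0 : (K.orderIsoOfFin hK 0 : Fin n) ∈ K := (K.orderIsoOfFin hK 0).2
  have h1 : (K.orderIsoOfFin hK 1 : Fin n) ∈ K := (K.orderIsoOfFin hK 1).2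
  have hne : (K.orderIsoOfFin hK 0 : Fin n) ≠ (K.orderIsoOfFin hK 1 : Fin n) := by
    intro h
    have := (K.orderIsoOfFin hK).injective (Subtype.ext h)
    simp at this
  simp only [hKdef, Finset.mem_insert, Finset.mem_singleton] at h0 h1
  rcases h0 with h0 | h0 <;> rcases h1 with h1 | h1 <;>
    first
      | (exact absurd (h0.trans h1.symm) hne)
      | (exact Or.inl ⟨h0, h1⟩)
      | (exact Or.inr ⟨h0, h1⟩)

lemma prop_div {m : ℕ} {c : Fin m → ℂ} {i0 : Fin m} (hi0 : c i0 ≠ 0)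
    {M : Fin m → MvPolynomial (Fin m) ℂ}
    (H : ∀ a b, C (c a) * M b = C (c b) * M a) (j : Fin m) :
    M j = C (c j) * (C (c i0)⁻¹ * M i0) := by
  have hC0 : (C (c i0) : MvPolynomial (Fin m) ℂ) ≠ 0 := by
    simpa using hi0
  apply mul_left_cancel₀ hC0
  rw [H i0 j,
    show C (c i0) * (C (c j) * (C (c i0)⁻¹ * M i0))
      = (C (c i0) * C (c i0)⁻¹) * (C (c j) * M i0) from by ring,
    ← C_mul, mul_inv_cancel₀ hi0, C_1, one_mul]

lemma sum_XC {m : ℕ} {L : MvPolynomial (Fin m) ℂ} {c : Fin m → ℂ}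
    (hC : ∀ j, pderiv j L = C (c j)) (hE : ∑ j, X j * pderiv j L = L)
    (p : MvPolynomial (Fin m) ℂ) :
    ∑ j, X j * (C (c j) * p) = L * p := by
  calc ∑ j, X j * (C (c j) * p) = (∑ j, X j * C (c j)) * p := by
        rw [Finset.sum_mul]
        exact Finset.sum_congr rfl fun j _ => by ring
    _ = L * p := by
        rw [show (∑ j, X j * C (c j)) = L from by
          rw [← hE]; exact Finset.sum_congr rfl fun j _ => by rw [hC j]]

/-- **Tangent space to the indeterminacy scheme at `(L², L³)`.** For a nonzero linear
form `L` on `ℂ^{r+1}`, homogeneous `F'` of degree 2 and `G'` of degree 3, the pair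
`(F',G')` satisfies the first-order condition `d(L²) ∧ dG' + dF' ∧ d(L³) = 0` if and
only if `2G' − 3LF'` is a scalar multiple of `L³`, i.e. `G' = (3/2)·L·F'` modulo `⟨L³⟩`
(after the allowed modification of `F'` by multiples of `L²`). -/
theorem tangent_space_indeterminacy (r : ℕ)
    (L F' G' : MvPolynomial (Fin (r + 1)) ℂ)
    (hL : L.IsHomogeneous 1) (hL0 : L ≠ 0)
    (hF : F'.IsHomogeneous 2) (hG : G'.IsHomogeneous 3) :
    dwedge ![L ^ 2, G'] + dwedge ![F', L ^ 3] = 0 ↔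
      ∃ c : ℂ, (2 : MvPolynomial (Fin (r + 1)) ℂ) * G'
        = 3 * (L * F') + C c * L ^ 3 := by
  set c : Fin (r+1) → ℂ := fun j => coeff 0 (pderiv j L) with hcdef
  have hC : ∀ j, pderiv j L = C (c j) := fun j =>
    homog_zero_eq_C (by simpa using pd_homog hL j)
  have hEulL : ∑ j, X j * pderiv j L = L := by simpa using euler hL
  constructor
  · -- forward direction
    intro H
    have hEulG : ∑ j, X j * pderiv j G' = 3 * G' := by rw [euler hG, Nat.cast_ofNat, map_ofNat]
    have hEulF : ∑ j, X j * pderiv j F' = 2 * F' := by rw [euler hF, Nat.cast_ofNat, map_ofNat]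
    -- componentwise vanishing
    have HQ : ∀ a b : Fin (r+1),
        pderiv a (L^2) * pderiv b G' - pderiv b (L^2) * pderiv a G'
        + (pderiv a F' * pderiv b (L^3) - pderiv b F' * pderiv a (L^3)) = 0 := by
      intro a b
      rcases eq_or_ne a b with rfl | hab
      · ring
      obtain ⟨hK, hcase⟩ := pair_exists hab
      have h0 := congrFun H {a, b}
      rw [Pi.add_apply, Pi.zero_apply, dwedge_eval _ hK, dwedge_eval _ hK] at h0
      rcases hcase with ⟨h1, h2⟩ | ⟨h1, h2⟩ <;> rw [h1, h2] at h0
      · linear_combination h0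
      · linear_combination -h0
    -- proportionality of M
    have HM : ∀ a b : Fin (r+1),
        C (c a) * (2 * pderiv b G' - 3 * (L * pderiv b F'))
          = C (c b) * (2 * pderiv a G' - 3 * (L * pderiv a F')) := by
      intro a b
      have h := HQ a b
      simp only [pderiv_pow, Nat.cast_ofNat, hC, show (2:ℕ)-1 = 1 from rfl,
        show (3:ℕ)-1 = 2 from rfl, pow_one] at h
      have hz : L * (C (c a) * (2 * pderiv b G' - 3 * (L * pderiv b F'))
          - C (c b) * (2 * pderiv a G' - 3 * (L * pderiv a F'))) = 0 := by
        linear_combination h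
      rcases mul_eq_zero.mp hz with h' | h'
      · exact absurd h' hL0
      · exact sub_eq_zero.mp h'
    -- a nonvanishing coefficient
    obtain ⟨i0, hi0⟩ : ∃ i0, c i0 ≠ 0 := by
      by_contra hall
      push_neg at hall
      apply hL0
      rw [← hEulL]
      refine Finset.sum_eq_zero fun j _ => ?_
      rw [hC j, hall j, map_zero, mul_zero]
    have hC0 : (C (c i0) : MvPolynomial (Fin (r+1)) ℂ) ≠ 0 := by simpa using hi0
    set h : MvPolynomial (Fin (r+1)) ℂ :=
      C (c i0)⁻¹ * (2 * pderiv i0 G' - 3 * (L * pderiv i0 F')) with hhdef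
    have hMh : ∀ j, 2 * pderiv j G' - 3 * (L * pderiv j F') = C (c j) * h :=
      prop_div hi0 HM
    have hh2 : h.IsHomogeneous 2 := by
      rw [hhdef]
      apply homog_C_mul
      have h1 : ((2 : MvPolynomial (Fin (r+1)) ℂ) * pderiv i0 G').IsHomogeneous 2 := by
        rw [show (2 : MvPolynomial (Fin (r+1)) ℂ) = C 2 from (map_ofNat _ _).symm]
        exact homog_C_mul (by simpa using pd_homog hG i0) 2
      have h2 : ((3 : MvPolynomial (Fin (r+1)) ℂ) * (L * pderiv i0 F')).IsHomogeneous 2 := by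
        rw [show (3 : MvPolynomial (Fin (r+1)) ℂ) = C 3 from (map_ofNat _ _).symm]
        exact homog_C_mul (by simpa using hL.mul (pd_homog hF i0)) 3
      exact h1.sub h2
    -- Euler contraction of M : equation (1)
    have eq1 : 6 * G' - 6 * (L * F') = L * h := by
      have e1 : ∑ j, X j * (2 * pderiv j G' - 3 * (L * pderiv j F'))
          = 6 * G' - 6 * (L * F') := by
        calc ∑ j, X j * (2 * pderiv j G' - 3 * (L * pderiv j F'))
            = ∑ j, (2 * (X j * pderiv j G') - 3 * (L * (X j * pderiv j F'))) :=
              Finset.sum_congr rfl fun j _ => by ring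
          _ = 2 * ∑ j, X j * pderiv j G' - 3 * (L * ∑ j, X j * pderiv j F') := by
              rw [Finset.sum_sub_distrib, ← Finset.mul_sum, ← Finset.mul_sum, ← Finset.mul_sum]
          _ = 6 * G' - 6 * (L * F') := by rw [hEulG, hEulF]; ring
      rw [← e1, Finset.sum_congr rfl fun j _ => by rw [hMh j], sum_XC hC hEulL]
    -- second division step
    have hEulh : ∑ j, X j * pderiv j h = 2 * h := by rw [euler hh2, Nat.cast_ofNat, map_ofNat]
    have HN : ∀ a b : Fin (r+1),
        C (c a) * (3 * pderiv b F' - pderiv b h)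
          = C (c b) * (3 * pderiv a F' - pderiv a h) := by
      intro a b
      have hab := congrArg (pderiv a) (hMh b)
      have hba := congrArg (pderiv b) (hMh a)
      simp only [map_sub, pderiv_mul, pd_two, pd_three, pderiv_C, pderiv_C_mul, hC, zero_mul,
        zero_add, mul_zero, add_zero] at hab hba
      rw [pd_comm b a G', pd_comm b a F'] at hba
      linear_combination hba - hab
    set g : MvPolynomial (Fin (r+1)) ℂ :=
      C (c i0)⁻¹ * (3 * pderiv i0 F' - pderiv i0 h) with hgdef
    have hNg : ∀ j, 3 * pderiv j F' - pderiv j h = C (c j) * g := prop_div hi0 HN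
    have hg1 : g.IsHomogeneous 1 := by
      rw [hgdef]
      apply homog_C_mul
      have h1 : ((3 : MvPolynomial (Fin (r+1)) ℂ) * pderiv i0 F').IsHomogeneous 1 := by
        rw [show (3 : MvPolynomial (Fin (r+1)) ℂ) = C 3 from (map_ofNat _ _).symm]
        exact homog_C_mul (by simpa using pd_homog hF i0) 3
      exact h1.sub (by simpa using pd_homog hh2 i0)
    -- equation (2)
    have eq2 : 6 * F' - 2 * h = L * g := by
      have e2 : ∑ j, X j * (3 * pderiv j F' - pderiv j h) = 6 * F' - 2 * h := by
        calc ∑ j, X j * (3 * pderiv j F' - pderiv j h)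
            = ∑ j, (3 * (X j * pderiv j F') - X j * pderiv j h) :=
              Finset.sum_congr rfl fun j _ => by ring
          _ = 3 * ∑ j, X j * pderiv j F' - ∑ j, X j * pderiv j h := by
              rw [Finset.sum_sub_distrib, ← Finset.mul_sum]
          _ = 6 * F' - 2 * h := by rw [hEulF, hEulh]; ring
      rw [← e2, Finset.sum_congr rfl fun j _ => by rw [hNg j], sum_XC hC hEulL]
    -- g is proportional to L
    have hdg : ∀ j, L * pderiv j g = C (c j) * g := by
      intro j
      have hj := congrArg (pderiv j) eq2
      simp only [map_sub, pderiv_mul, pd_two, pd_six, pderiv_C, hC, zero_mul, zero_add,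
        mul_zero, add_zero] at hj
      have hNj := hNg j
      linear_combination 2 * hNj - hj
    set d : ℂ := coeff 0 (pderiv i0 g) with hddef
    have hgd : pderiv i0 g = C d := homog_zero_eq_C (by simpa using pd_homog hg1 i0)
    have hgL : g = (C (c i0)⁻¹ * C d) * L := by
      apply mul_left_cancel₀ hC0
      have := hdg i0
      rw [hgd] at this
      rw [← this,
        show C (c i0) * (C (c i0)⁻¹ * C d * L) = (C (c i0) * C (c i0)⁻¹) * (C d * L) from by
          ring, ← C_mul, mul_inv_cancel₀ hi0, C_1, one_mul]
      ring
    set e : ℂ := (c i0)⁻¹ * d with hedef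
    have eq2' : 6 * F' - 2 * h = C e * L^2 := by
      rw [eq2, hgL, hedef, C_mul]; ring
    -- conclude
    refine ⟨-e / 6, ?_⟩
    have h12 : 12 * G' = 18 * (L * F') - C e * L^3 := by
      linear_combination 2 * eq1 - L * eq2'
    have h6cc : (6 : MvPolynomial (Fin (r+1)) ℂ) * C (-e/6) = - C e := by
      rw [show (6 : MvPolynomial (Fin (r+1)) ℂ) = C 6 from (map_ofNat _ _).symm, ← C_mul,
        ← C_neg]
      congr 1
      ring
    have h60 : (6 : MvPolynomial (Fin (r+1)) ℂ) ≠ 0 := by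
      rw [show (6 : MvPolynomial (Fin (r+1)) ℂ) = C 6 from (map_ofNat _ _).symm]
      simp
    apply mul_left_cancel₀ h60
    linear_combination h12 - L^3 * h6cc
  · -- reverse direction
    rintro ⟨cc, hcc⟩
    funext K
    rw [Pi.add_apply, Pi.zero_apply]
    by_cases hK : K.card = 2
    · rw [dwedge_eval _ hK, dwedge_eval _ hK]
      set e0 : Fin (r+1) := (K.orderIsoOfFin hK 0 : Fin (r+1))
      set e1 : Fin (r+1) := (K.orderIsoOfFin hK 1 : Fin (r+1))
      have R : ∀ j : Fin (r+1), 2 * pderiv j G'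
          = 3 * (C (c j) * F' + L * pderiv j F') + C cc * (3 * L^2 * C (c j)) := by
        intro j
        have hj := congrArg (pderiv j) hcc
        simp only [map_add, pderiv_mul, pd_two, pd_three, pderiv_C, pderiv_C_mul, pderiv_pow,
          Nat.cast_ofNat, hC, zero_mul, zero_add, mul_zero, add_zero,
          show (3:ℕ)-1 = 2 from rfl] at hj
        linear_combination hj
      simp only [pderiv_pow, Nat.cast_ofNat, hC, show (2:ℕ)-1 = 1 from rfl,
        show (3:ℕ)-1 = 2 from rfl, pow_one]
      linear_combination (L * C (c e0)) * R e1 - (L * C (c e1)) * R e0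
    · rw [dwedge, dwedge, dif_neg hK, dif_neg hK, add_zero]
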